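/- (Theorem 1 of the paper, global case.) If (p*_1,…,p*_{n₂}, Θ*) is a global maximum of L — that is, L(p_1,…,p_{n₂}, Θ) ≤ L(p*_1,…,p*_{n₂}, Θ*) for all probability vectors p_1,…,p_{n₂} on {1,…,G} and all Θ ∈ T — then Θ* is a global maximum of the weighted log-likelihood: ℓ_w(Θ) ≤ ℓ_w(Θ*) for all Θ ∈ T. -/

import Mathlib

open Real Finset

namespace FSC

variable {T : Type*}

/-- Marginal density of the `j`-th unlabelled observation: `m_j(Θ) = ∑_g f²_j(Θ, g)`. -/
noncomputable def marg {G n₂ : ℕ} (f2 : Fin n₂ → T → Fin G → ℝ) (j : Fin n₂) (Θ : T) : ℝ :=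
  ∑ g, f2 j Θ g

/-- Conditional distribution of the latent label: `c_j(Θ)(g) = f²_j(Θ, g) / m_j(Θ)`. -/
noncomputable def condP {G n₂ : ℕ} (f2 : Fin n₂ → T → Fin G → ℝ) (j : Fin n₂) (Θ : T)
    (g : Fin G) : ℝ :=
  f2 j Θ g / marg f2 j Θ

/-- Probability vector on `{1,…,G}`. -/
def IsProbVec {G : ℕ} (p : Fin G → ℝ) : Prop :=
  (∀ g, 0 ≤ p g) ∧ ∑ g, p g = 1

/-- The weighted log-likelihood `ℓ_w(Θ)`. -/
noncomputable def ellw {G n₁ n₂ : ℕ} (f1 : Fin n₁ → T → ℝ) (f2 : Fin n₂ → T → Fin G → ℝ)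
    (z : Fin n₂ → Fin G) (lam : ℝ) (Θ : T) : ℝ :=
  lam * ∑ j, Real.log (f1 j Θ) + (1 - lam) * ∑ j, Real.log (f2 j Θ (z j))

/-- The lower-bound function `L(p_1,…,p_{n₂}, Θ)`.  (If `p j g = 0` the corresponding
term is `0 * Real.log (… / 0) = 0`, matching the paper's convention.) -/
noncomputable def Lfun {G n₁ n₂ : ℕ} (f1 : Fin n₁ → T → ℝ) (f2 : Fin n₂ → T → Fin G → ℝ)
    (z : Fin n₂ → Fin G) (lam : ℝ) (p : Fin n₂ → Fin G → ℝ) (Θ : T) : ℝ :=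
  lam * ∑ j, Real.log (f1 j Θ) +
    (1 - lam) * ∑ j, (Real.log (condP f2 j Θ (z j)) +
      ∑ g, p j g * Real.log (f2 j Θ g / p j g))

end FSC

namespace FSC

lemma gibbs_aux {G : ℕ} (hG : 1 ≤ G) (f : Fin G → ℝ) (hf : ∀ g, 0 < f g)
    (p : Fin G → ℝ) (hp : IsProbVec p) :
    ∑ g, p g * Real.log (f g / p g) ≤ Real.log (∑ g, f g) := by
  have hne : (Finset.univ : Finset (Fin G)).Nonempty := by
    simpa [Finset.univ_nonempty_iff] using Fin.pos_iff_nonempty.mp hG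
  have hm : 0 < ∑ g, f g := Finset.sum_pos (fun g _ => hf g) hne
  set m := ∑ g, f g with hmdef
  have key : ∀ g, p g * Real.log (f g / p g) ≤ p g * Real.log m + (f g / m - p g) := by
    intro g
    rcases eq_or_lt_of_le (hp.1 g) with h0 | hpos
    · have : (0:ℝ) ≤ f g / m := le_of_lt (div_pos (hf g) hm)
      simp [← h0, this]
    · have h1 : Real.log (f g / (p g * m)) ≤ f g / (p g * m) - 1 :=
        Real.log_le_sub_one_of_pos (div_pos (hf g) (mul_pos hpos hm))
      have hsplit : Real.log (f g / p g) = Real.log (f g / (p g * m)) + Real.log m := by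
        rw [← Real.log_mul (ne_of_gt (div_pos (hf g) (mul_pos hpos hm))) (ne_of_gt hm)]
        congr 1
        field_simp
      have h2 : p g * Real.log (f g / (p g * m)) ≤ f g / m - p g := by
        have := mul_le_mul_of_nonneg_left h1 (le_of_lt hpos)
        calc p g * Real.log (f g / (p g * m)) ≤ p g * (f g / (p g * m) - 1) := this
          _ = f g / m - p g := by field_simp
      calc p g * Real.log (f g / p g)
          = p g * Real.log (f g / (p g * m)) + p g * Real.log m := by
            rw [hsplit]; ring
        _ ≤ (f g / m - p g) + p g * Real.log m := by linarith
        _ = p g * Real.log m + (f g / m - p g) := by ring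
  calc ∑ g, p g * Real.log (f g / p g)
      ≤ ∑ g, (p g * Real.log m + (f g / m - p g)) := Finset.sum_le_sum fun g _ => key g
    _ = Real.log m := by
        rw [Finset.sum_add_distrib, Finset.sum_sub_distrib, ← Finset.sum_mul,
          ← Finset.sum_div, hp.2, ← hmdef, div_self (ne_of_gt hm)]
        ring

lemma marg_pos {T : Type*} {G n₂ : ℕ} (hG : 1 ≤ G) (f2 : Fin n₂ → T → Fin G → ℝ)
    (hf2 : ∀ j Θ g, 0 < f2 j Θ g) (j : Fin n₂) (Θ : T) : 0 < marg f2 j Θ := by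
  have hne : (Finset.univ : Finset (Fin G)).Nonempty := by
    simpa [Finset.univ_nonempty_iff] using Fin.pos_iff_nonempty.mp hG
  exact Finset.sum_pos (fun g _ => hf2 j Θ g) hne

lemma Lfun_cond_eq_ellw {T : Type*} {G n₁ n₂ : ℕ} (hG : 1 ≤ G)
    (f1 : Fin n₁ → T → ℝ) (f2 : Fin n₂ → T → Fin G → ℝ)
    (hf2 : ∀ j Θ g, 0 < f2 j Θ g) (z : Fin n₂ → Fin G) (lam : ℝ) (Θ : T) :
    Lfun f1 f2 z lam (fun j => condP f2 j Θ) Θ = ellw f1 f2 z lam Θ := by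
  unfold Lfun ellw
  congr 1
  congr 1
  apply Finset.sum_congr rfl
  intro j _
  have hm := marg_pos hG f2 hf2 j Θ
  have h1 : ∀ g : Fin G, f2 j Θ g / condP f2 j Θ g = marg f2 j Θ := by
    intro g
    unfold condP
    rw [div_div_eq_mul_div, mul_comm, mul_div_assoc, div_self (ne_of_gt (hf2 j Θ g)), mul_one]
  have h2 : ∑ g, condP f2 j Θ g * Real.log (f2 j Θ g / condP f2 j Θ g)
      = Real.log (marg f2 j Θ) := by
    calc ∑ g, condP f2 j Θ g * Real.log (f2 j Θ g / condP f2 j Θ g)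
        = ∑ g, condP f2 j Θ g * Real.log (marg f2 j Θ) := by
          apply Finset.sum_congr rfl; intro g _; rw [h1 g]
      _ = (∑ g, condP f2 j Θ g) * Real.log (marg f2 j Θ) := by rw [Finset.sum_mul]
      _ = Real.log (marg f2 j Θ) := by
          have h3 : (∑ g, condP f2 j Θ g) = 1 := by
            unfold condP
            rw [← Finset.sum_div]
            exact div_self (ne_of_gt hm)
          rw [h3, one_mul]
  rw [h2]
  unfold condP
  rw [Real.log_div (ne_of_gt (hf2 j Θ (z j))) (ne_of_gt hm)]
  ring

/-- **Theorem 1 (global case).**  If `(p*_1,…,p*_{n₂}, Θ*)` is a global maximum of `L`,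
then `Θ*` is a global maximum of the weighted log-likelihood `ℓ_w`. -/
theorem theorem_one_global {T : Type*} (G n₁ n₂ : ℕ) (hG : 1 ≤ G) (hn₂ : 1 ≤ n₂)
    (f1 : Fin n₁ → T → ℝ) (f2 : Fin n₂ → T → Fin G → ℝ)
    (hf1 : ∀ j Θ, 0 < f1 j Θ) (hf2 : ∀ j Θ g, 0 < f2 j Θ g)
    (z : Fin n₂ → Fin G) (lam : ℝ) (hlam : lam ∈ Set.Icc (0 : ℝ) 1)
    (pstar : Fin n₂ → Fin G → ℝ) (hpstar : ∀ j, IsProbVec (pstar j)) (Θstar : T)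
    (hmax : ∀ (p : Fin n₂ → Fin G → ℝ), (∀ j, IsProbVec (p j)) → ∀ Θ : T,
      Lfun f1 f2 z lam p Θ ≤ Lfun f1 f2 z lam pstar Θstar) :
    ∀ Θ : T, ellw f1 f2 z lam Θ ≤ ellw f1 f2 z lam Θstar := by
  intro Θ
  -- the conditional distributions form probability vectors
  have hcondprob : ∀ (Θ' : T) (j : Fin n₂), IsProbVec (condP f2 j Θ') := by
    intro Θ' j
    have hm := marg_pos hG f2 hf2 j Θ'
    constructor
    · intro g
      exact le_of_lt (div_pos (hf2 j Θ' g) hm)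
    · unfold condP
      rw [← Finset.sum_div]
      exact div_self (ne_of_gt hm)
  -- Step 1: ℓ_w(Θ) = L(cond, Θ) ≤ L(p*, Θ*)
  have step1 : ellw f1 f2 z lam Θ ≤ Lfun f1 f2 z lam pstar Θstar := by
    rw [← Lfun_cond_eq_ellw hG f1 f2 hf2 z lam Θ]
    exact hmax _ (hcondprob Θ) Θ
  -- Step 2: L(p*, Θ*) ≤ ℓ_w(Θ*)
  have step2 : Lfun f1 f2 z lam pstar Θstar ≤ ellw f1 f2 z lam Θstar := by
    unfold Lfun ellw
    have hlam1 : (0:ℝ) ≤ 1 - lam := by linarith [hlam.2]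
    apply add_le_add_right
    apply mul_le_mul_of_nonneg_left _ hlam1
    apply Finset.sum_le_sum
    intro j _
    have hm := marg_pos hG f2 hf2 j Θstar
    have hgibbs := gibbs_aux hG (f2 j Θstar) (hf2 j Θstar) (pstar j) (hpstar j)
    have hc : Real.log (condP f2 j Θstar (z j))
        = Real.log (f2 j Θstar (z j)) - Real.log (marg f2 j Θstar) := by
      unfold condP
      exact Real.log_div (ne_of_gt (hf2 j Θstar (z j))) (ne_of_gt hm)
    have : Real.log (marg f2 j Θstar) = Real.log (∑ g, f2 j Θstar g) := rfl
    rw [hc]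
    linarith [hgibbs, this ▸ hgibbs]
  linarith

end FSC
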